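/- Let ℓ ≥ 3, m ≥ 2, and let S be a finite set of integers with min(S) ≥ ℓ, together with a function r : S → ℕ \ {0}. Then there exists an (ℓ, m)-uniform mixed hypergraph H such that S(H) = S and for every s ∈ S the number of proper colorings of H with exactly s colors, counted up to relabeling of colors, equals r(s). -/

import Mathlib

section Helpers

lemma exists_fresh2 {n : ℕ} (hn : 3 ≤ n) (a b : Fin n) : ∃ c : Fin n, c ≠ a ∧ c ≠ b := by
  by_contra h
  push_neg at h
  have hsub : (Finset.univ : Finset (Fin n)) ⊆ {a, b} := by
    intro c _
    rcases Classical.em (c = a) with h1 | h1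
    · simp [h1]
    · simp [h c h1]
  have := Finset.card_le_card hsub
  have h2 : ({a, b} : Finset (Fin n)).card ≤ 2 :=
    (Finset.card_insert_le _ _).trans (by simp)
  simp at this
  omega

lemma exists_fresh1 {n : ℕ} (hn : 3 ≤ n) (a : Fin n) : ∃ c : Fin n, c ≠ a :=
  (exists_fresh2 hn a a).imp (fun _ h => h.1)

end Helpers

section Rigidity

variable {T : Type} [Fintype T] [DecidableEq T] [Nonempty T]
variable {d : T → ℕ}

/-- coverage triple condition -/
def Cov (u v w : ∀ t, Fin (d t)) : Prop := ∀ t, u t = v t ∨ u t = w t ∨ v t = w t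

variable {φ : (∀ t, Fin (d t)) → ℕ}

lemma force
    (hD : ∀ u v, (∀ t, u t ≠ v t) → φ u ≠ φ v)
    (hC : ∀ u v w, u ≠ v → u ≠ w → v ≠ w → Cov u v w → (φ u = φ v ∨ φ u = φ w ∨ φ v = φ w))
    {u x z : ∀ t, Fin (d t)} (hux : φ u ≠ φ x)
    (hzu : ∀ t, z t ≠ u t) (hcov : ∀ t, u t = x t ∨ x t = z t) :
    φ z = φ x := by
  rcases Classical.em (z = x) with h | h
  · rw [h]
  · have hne_ux : u ≠ x := fun he => hux (by rw [he])
    have hne_uz : u ≠ z := by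
      intro he
      exact hzu (Classical.arbitrary T) (by rw [he])
    have := hC u x z hne_ux hne_uz (fun he => h he.symm)
      (fun t => Or.imp id Or.inr (hcov t))
    rcases this with h1 | h1 | h1
    · exact absurd h1 hux
    · exact absurd h1 (hD u z (fun t => (hzu t).symm))
    · exact h1.symm

lemma box
    (hd : ∀ t, 3 ≤ d t)
    (hD : ∀ u v, (∀ t, u t ≠ v t) → φ u ≠ φ v)
    (hC : ∀ u v w, u ≠ v → u ≠ w → v ≠ w → Cov u v w → (φ u = φ v ∨ φ u = φ w ∨ φ v = φ w))
    {u v y : ∀ t, Fin (d t)} (huv : u ≠ v) (hφuv : φ u = φ v)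
    (hy : ∀ t, u t = v t → y t = u t) :
    φ y = φ u := by
  by_contra hyu
  have hz : ∀ t, ∃ c : Fin (d t), (y t = u t → (c ≠ u t ∧ c ≠ v t)) ∧ (y t ≠ u t → c = u t) := by
    intro t
    rcases Classical.em (y t = u t) with h | h
    · obtain ⟨c, hc1, hc2⟩ := exists_fresh2 (hd t) (u t) (v t)
      exact ⟨c, fun _ => ⟨hc1, hc2⟩, fun hne => absurd h hne⟩
    · exact ⟨u t, fun he => absurd he h, fun _ => rfl⟩
  choose z hz1 hz2 using hz
  have hzy : ∀ t, z t ≠ y t := by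
    intro t
    rcases Classical.em (y t = u t) with h | h
    · rw [h]; exact (hz1 t h).1
    · rw [hz2 t h]; exact fun he => h he.symm
  have hcov : ∀ t, y t = u t ∨ u t = z t := by
    intro t
    rcases Classical.em (y t = u t) with h | h
    · exact Or.inl h
    · exact Or.inr (hz2 t h).symm
  have hφz : φ z = φ u := force hD hC hyu hzy hcov
  have hzv : ∀ t, v t ≠ z t := by
    intro t
    rcases Classical.em (y t = u t) with h | h
    · exact fun he => (hz1 t h).2 he.symm
    · rw [hz2 t h]
      intro he
      exact h (hy t he.symm)
  exact hD v z hzv (by rw [hφz, hφuv])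


lemma smallpair_aux
    (hd : ∀ t, 3 ≤ d t)
    (hD : ∀ u v, (∀ t, u t ≠ v t) → φ u ≠ φ v)
    (hC : ∀ u v w, u ≠ v → u ≠ w → v ≠ w → Cov u v w → (φ u = φ v ∨ φ u = φ w ∨ φ v = φ w)) :
    ∀ n : ℕ, ∀ u v : (∀ t, Fin (d t)), u ≠ v → φ u = φ v →
      (Finset.univ.filter (fun t => u t = v t)).card = n →
      ∃ u' v' : (∀ t, Fin (d t)), ∃ ts : T, u' ≠ v' ∧ φ u' = φ v' ∧
        (∀ t, u' t = v' t ↔ t = ts) := by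
  intro n
  induction n using Nat.strong_induction_on with
  | _ n IH =>
    intro u v huv hφuv hcard
    -- the agreement set is nonempty
    have hA : ∃ t0, u t0 = v t0 := by
      by_contra h
      push_neg at h
      exact hD u v h hφuv
    obtain ⟨t0, ht0⟩ := hA
    rcases Classical.em (∀ t, u t = v t → t = t0) with hall | hall
    · exact ⟨u, v, t0, huv, hφuv, fun t => ⟨hall t, fun h => h ▸ ht0⟩⟩
    · push_neg at hall
      obtain ⟨s0, hs0eq, hs0ne⟩ := hall
      -- construct w agreeing with u exactly at t0
      have hw : ∀ t, ∃ c : Fin (d t), (t = t0 → c = u t) ∧ (t ≠ t0 → c ≠ u t) := by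
        intro t
        rcases Classical.em (t = t0) with h | h
        · exact ⟨u t, fun _ => rfl, fun hne => absurd h hne⟩
        · obtain ⟨c, hc⟩ := exists_fresh1 (hd t) (u t)
          exact ⟨c, fun he => absurd he h, fun _ => hc⟩
      choose w hw1 hw2 using hw
      rcases Classical.em (φ w = φ u) with hwu | hwu
      · -- (u, w) is a pair with agreement exactly {t0}
        refine ⟨u, w, t0, ?_, hwu.symm, ?_⟩
        · intro he
          exact hw2 s0 hs0ne (by rw [← he])
        · intro t
          constructor
          · intro he
            by_contra hne
            exact hw2 t hne he.symm
          · intro he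
            exact (hw1 t he).symm
      · -- force: z := u except fresh at t0
        obtain ⟨c0, hc0⟩ := exists_fresh1 (hd t0) (u t0)
        have hzdef : ∀ t, ∃ c : Fin (d t), (t = t0 → c ≠ u t) ∧ (t ≠ t0 → c = u t) := by
          intro t
          rcases Classical.em (t = t0) with h | h
          · subst h
            exact ⟨c0, fun _ => hc0, fun hne => absurd rfl hne⟩
          · exact ⟨u t, fun he => absurd he h, fun _ => rfl⟩
        choose z hza hzb using hzdef
        have hφz : φ z = φ u := by
          refine force hD hC hwu ?_ ?_
          · intro t
            rcases Classical.em (t = t0) with h | h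
            · rw [hw1 t h]; exact hza t h
            · rw [hzb t h]; exact fun he => hw2 t h he.symm
          · intro t
            rcases Classical.em (t = t0) with h | h
            · exact Or.inl (hw1 t h)
            · exact Or.inr (hzb t h).symm
        -- y := u on agreement set, fresh off it
        have hydef : ∀ t, ∃ c : Fin (d t), (u t = v t → c = u t) ∧ (u t ≠ v t → c ≠ u t) := by
          intro t
          rcases Classical.em (u t = v t) with h | h
          · exact ⟨u t, fun _ => rfl, fun hne => absurd h hne⟩
          · obtain ⟨c, hc⟩ := exists_fresh1 (hd t) (u t)
            exact ⟨c, fun he => absurd he h, fun _ => hc⟩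
        choose y hya hyb using hydef
        have hφy : φ y = φ u := by
          refine box hd hD hC huv hφuv ?_
          intro t he
          exact hya t he
        -- new pair (z, y) with agreement = A \ {t0}
        have hkey : ∀ t, (z t = y t ↔ (u t = v t ∧ t ≠ t0)) := by
          intro t
          rcases Classical.em (t = t0) with h | h
          · subst h
            constructor
            · intro he
              exfalso
              have h1 : y t = u t := hya t ht0
              rw [← he] at h1
              exact (hza t rfl) h1
            · rintro ⟨-, hne⟩
              exact absurd rfl hne
          · rw [hzb t h]
            constructor
            · intro he
              refine ⟨?_, h⟩
              by_contra hne
              exact hyb t hne he.symm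
            · rintro ⟨he, -⟩
              exact (hya t he).symm
        have hzy : z ≠ y := by
          intro he
          have := (hkey t0).mp (by rw [he])
          exact this.2 rfl
        have hφzy : φ z = φ y := by rw [hφz, hφy]
        have hcard' : (Finset.univ.filter (fun t => z t = y t)).card < n := by
          have hsub : (Finset.univ.filter (fun t => z t = y t)) ⊆
              (Finset.univ.filter (fun t => u t = v t)).erase t0 := by
            intro t ht
            simp only [Finset.mem_filter, Finset.mem_univ, true_and] at ht
            have := (hkey t).mp ht
            simp [Finset.mem_erase, this.1, this.2]
          have hlt : ((Finset.univ.filter (fun t => u t = v t)).erase t0).card <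
              (Finset.univ.filter (fun t => u t = v t)).card := by
            apply Finset.card_erase_lt_of_mem
            simp [ht0]
          calc (Finset.univ.filter (fun t => z t = y t)).card
              ≤ _ := Finset.card_le_card hsub
            _ < _ := hlt
          |>.trans_eq hcard
        exact IH _ (hcard ▸ hcard') z y hzy hφzy rfl


theorem rigidity
    (hd : ∀ t, 3 ≤ d t)
    (hD : ∀ u v, (∀ t, u t ≠ v t) → φ u ≠ φ v)
    (hC : ∀ u v w, u ≠ v → u ≠ w → v ≠ w → Cov u v w → (φ u = φ v ∨ φ u = φ w ∨ φ v = φ w)) :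
    ∃ ts : T, ∀ x y, φ x = φ y ↔ x ts = y ts := by
  rcases Classical.em (∃ u v : (∀ t, Fin (d t)), u ≠ v ∧ φ u = φ v) with hpair | hpair
  · obtain ⟨u0, v0, hne0, hφ0⟩ := hpair
    obtain ⟨u, v, ts, huv, hφuv, hiff⟩ :=
      smallpair_aux hd hD hC _ u0 v0 hne0 hφ0 rfl
    have F1 : ∀ y, y ts = u ts → φ y = φ u := by
      intro y hy
      refine box hd hD hC huv hφuv ?_
      intro t he
      have ht : t = ts := (hiff t).mp he
      subst ht
      exact hy
    have F2 : ∀ y, y ts ≠ u ts → φ y ≠ φ u := by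
      intro y hy hφy
      have hy'' : ∀ t, ∃ c : Fin (d t), (t = ts → c = u t) ∧ (t ≠ ts → c ≠ y t) := by
        intro t
        rcases Classical.em (t = ts) with h | h
        · exact ⟨u t, fun _ => rfl, fun hne => absurd h hne⟩
        · obtain ⟨c, hc⟩ := exists_fresh1 (hd t) (y t)
          exact ⟨c, fun he => absurd he h, fun _ => hc⟩
      choose y2 hy2a hy2b using hy''
      have hφy2 : φ y2 = φ u := F1 y2 (hy2a ts rfl)
      refine hD y y2 ?_ (by rw [hφy, hφy2])
      intro t
      rcases Classical.em (t = ts) with h | h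
      · subst h
        rw [hy2a t rfl]
        exact hy
      · exact fun he => (hy2b t h) he.symm
    have F3 : ∀ x y, x ts = y ts → φ x = φ y := by
      intro x y hxy
      rcases Classical.em (x ts = u ts) with hb | hb
      · rw [F1 x hb, F1 y (hxy ▸ hb)]
      · by_contra hφxy
        have hxyne : x ≠ y := fun he => hφxy (by rw [he])
        -- z : x with ts-coordinate replaced by u ts
        have hzdef : ∀ t, ∃ c : Fin (d t), (t = ts → c = u t) ∧ (t ≠ ts → c = x t) := by
          intro t
          rcases Classical.em (t = ts) with h | h
          · exact ⟨u t, fun _ => rfl, fun hne => absurd h hne⟩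
          · exact ⟨x t, fun he => absurd he h, fun _ => rfl⟩
        choose z hza hzb using hzdef
        have hφz : φ z = φ u := F1 z (hza ts rfl)
        have hxz : x ≠ z := by
          intro he
          exact hb (by rw [he, hza ts rfl])
        have hyz : y ≠ z := by
          intro he
          apply hb
          rw [hxy, he, hza ts rfl]
        have hcov : Cov x y z := by
          intro t
          rcases Classical.em (t = ts) with h | h
          · subst h; exact Or.inl hxy
          · exact Or.inr (Or.inl (hzb t h).symm)
        rcases hC x y z hxyne hxz hyz hcov with h1 | h1 | h1
        · exact hφxy h1
        · exact F2 x hb (h1.trans hφz)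
        · exact F2 y (fun he => hb (hxy.trans he)) (h1.trans hφz)
    have F4 : ∀ x y, φ x = φ y → x ts = y ts := by
      intro x y hφxy
      by_contra hxy
      have hy'def : ∀ t, ∃ c : Fin (d t), (t = ts → c = y t) ∧ (t ≠ ts → c ≠ x t) := by
        intro t
        rcases Classical.em (t = ts) with h | h
        · exact ⟨y t, fun _ => rfl, fun hne => absurd h hne⟩
        · obtain ⟨c, hc⟩ := exists_fresh1 (hd t) (x t)
          exact ⟨c, fun he => absurd he h, fun _ => hc⟩
      choose y' hy'a hy'b using hy'def
      have hφy' : φ y' = φ y := F3 y' y (hy'a ts rfl)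
      refine hD x y' ?_ (by rw [hφy', ← hφxy])
      intro t
      rcases Classical.em (t = ts) with h | h
      · subst h
        rw [hy'a t rfl]
        exact hxy
      · exact fun he => (hy'b t h) he.symm
    exact ⟨ts, fun x y => ⟨F4 x y, F3 x y⟩⟩
  · -- no coclass pair
    push_neg at hpair
    have hall : ∀ u v : (∀ t, Fin (d t)), φ u = φ v → u = v := by
      intro u v h
      by_contra hne
      exact hpair u v hne h
    rcases Classical.em (∃ t1 t2 : T, t1 ≠ t2) with ⟨t1, t2, ht12⟩ | hsing
    · -- N ≥ 2 : contradiction via L1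
      exfalso
      have h3 : ∀ t, (0 : ℕ) < d t := fun t => by have := hd t; omega
      have h3' : ∀ t, (1 : ℕ) < d t := fun t => by have := hd t; omega
      have h3'' : ∀ t, (2 : ℕ) < d t := fun t => by have := hd t; omega
      set u : ∀ t, Fin (d t) := fun t => ⟨0, h3 t⟩ with hu
      set v : ∀ t, Fin (d t) := fun t => ⟨if t = t1 then 0 else 1, by split <;> [exact h3 t; exact h3' t]⟩ with hv
      set w : ∀ t, Fin (d t) := fun t => ⟨if t = t1 then 2 else 1, by split <;> [exact h3'' t; exact h3' t]⟩ with hw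
      have huv : u ≠ v := by
        intro he
        have h0 := congrArg Fin.val (congrFun he t2)
        simp [hu, hv, if_neg (Ne.symm ht12)] at h0
      have huw : u ≠ w := by
        intro he
        have := congrArg Fin.val (congrFun he t1)
        simp [hu, hw] at this
      have hvw : v ≠ w := by
        intro he
        have := congrArg Fin.val (congrFun he t1)
        simp [hv, hw] at this
      have hcov : Cov u v w := by
        intro t
        rcases Classical.em (t = t1) with h | h
        · exact Or.inl (by apply Fin.ext; simp [hu, hv, h])
        · exact Or.inr (Or.inr (by apply Fin.ext; simp [hv, hw, h]))
      rcases hC u v w huv huw hvw hcov with h1 | h1 | h1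
      · exact huv (hall _ _ h1)
      · exact huw (hall _ _ h1)
      · exact hvw (hall _ _ h1)
    · -- singleton T
      push_neg at hsing
      obtain ⟨t0⟩ := (inferInstance : Nonempty T)
      refine ⟨t0, fun x y => ⟨?_, ?_⟩⟩
      · intro h
        rw [hall x y h]
      · intro h
        have : x = y := by
          funext t
          rw [hsing t t0]
          exact h
        rw [this]

end Rigidity

/-- A coloring is proper for a mixed hypergraph `(C, D)` if every `C`-edge has two
vertices of the same color and every `D`-edge has two vertices of distinct colors. -/
def Proper {V : Type} (C D : Set (Finset V)) (c : V → ℕ) : Prop :=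
  (∀ e ∈ C, ∃ u ∈ e, ∃ v ∈ e, u ≠ v ∧ c u = c v) ∧
  (∀ e ∈ D, ∃ u ∈ e, ∃ v ∈ e, c u ≠ c v)

/-- A coloring uses exactly `s` colors. -/
def UsesExactly {V : Type} [Fintype V] [DecidableEq V] (c : V → ℕ) (s : ℕ) : Prop :=
  (Finset.univ.image c).card = s

/-- The partition of the vertex set into color classes induced by a coloring. -/
def colorClasses {V : Type} [Fintype V] [DecidableEq V] (c : V → ℕ) :
    Finset (Finset V) :=
  Finset.univ.image (fun v => Finset.univ.filter (fun u => c u = c v))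

section PartitionLemmas
variable {V : Type} [Fintype V] [DecidableEq V]

lemma colorClasses_eq_of_iff {c c' : V → ℕ} (h : ∀ x y, c x = c y ↔ c' x = c' y) :
    colorClasses c = colorClasses c' := by
  unfold colorClasses
  have hfun : (fun v => Finset.univ.filter (fun u => c u = c v)) =
      (fun v => Finset.univ.filter (fun u => c' u = c' v)) := by
    funext v
    ext u
    simp only [Finset.mem_filter, Finset.mem_univ, true_and]
    exact h u v
  rw [hfun]

lemma colorClasses_rel {c c' : V → ℕ} (h : colorClasses c = colorClasses c')
    {x y : V} (hxy : c x = c y) : c' x = c' y := by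
  have hx : (Finset.univ.filter (fun u => c u = c x)) ∈ colorClasses c :=
    Finset.mem_image_of_mem _ (Finset.mem_univ x)
  rw [h] at hx
  obtain ⟨w, -, hw⟩ := Finset.mem_image.mp hx
  have h1 : x ∈ Finset.univ.filter (fun u => c u = c x) := by simp
  have h2 : y ∈ Finset.univ.filter (fun u => c u = c x) := by simp [hxy]
  rw [← hw] at h1 h2
  simp only [Finset.mem_filter, Finset.mem_univ, true_and] at h1 h2
  rw [h1, h2]

lemma card_image_eq_of_iff {c c' : V → ℕ} (h : ∀ x y, c x = c y ↔ c' x = c' y) :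
    (Finset.univ.image c).card = (Finset.univ.image c').card := by
  classical
  have hex : ∀ a ∈ Finset.univ.image c, ∃ x : V, c x = a := fun a ha => by
    obtain ⟨x, -, hx⟩ := Finset.mem_image.mp ha
    exact ⟨x, hx⟩
  refine Finset.card_bij (fun a ha => c' (Classical.choose (hex a ha))) ?_ ?_ ?_
  · intro a ha
    exact Finset.mem_image_of_mem _ (Finset.mem_univ _)
  · intro a1 h1 a2 h2 he
    have e1 := Classical.choose_spec (hex a1 h1)
    have e2 := Classical.choose_spec (hex a2 h2)
    rw [← e1, ← e2]
    exact (h _ _).mpr he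
  · intro b hb
    obtain ⟨y, -, hy⟩ := Finset.mem_image.mp hb
    have hmem : c y ∈ Finset.univ.image c := Finset.mem_image_of_mem _ (Finset.mem_univ _)
    refine ⟨c y, hmem, ?_⟩
    have := Classical.choose_spec (hex (c y) hmem)
    rw [← hy]
    exact (h _ _).mp this

end PartitionLemmas

namespace Stmt18

variable (ℓ m : ℕ) (S : Finset ℕ) (r : ℕ → ℕ)

/-- index set of modes -/
def Tfin : Finset ((_ : ℕ) × ℕ) := S.sigma (fun s => Finset.range (r s))

def TT := {x : (_ : ℕ) × ℕ // x ∈ Tfin S r}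

instance : Fintype (TT S r) := by unfold TT; infer_instance
instance : DecidableEq (TT S r) := by unfold TT; infer_instance

def dd (t : TT S r) : ℕ := t.1.1 - (ℓ - 3)

def zz : ℕ := (ℓ - 1) * (m - 2) + 1

abbrev CellT := ∀ t : TT S r, Fin (dd ℓ S r t)

instance : DecidableEq (CellT ℓ S r) := by unfold CellT; infer_instance
instance : Fintype (CellT ℓ S r) := by unfold CellT; infer_instance

abbrev Block := CellT ℓ S r ⊕ Fin (ℓ - 3)

instance : DecidableEq (Block ℓ S r) := by unfold Block; infer_instance
instance : Fintype (Block ℓ S r) := by unfold Block; infer_instance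

abbrev VV := Block ℓ S r × Fin (zz ℓ m)

instance : DecidableEq (VV ℓ m S r) := by unfold VV; infer_instance
instance : Fintype (VV ℓ m S r) := by unfold VV; infer_instance

def j0 : Fin (zz ℓ m) := ⟨0, Nat.succ_pos _⟩

/-- block-level adjacency (never-equal relation) -/
def Gadj : Block ℓ S r → Block ℓ S r → Prop :=
  fun b b' => match b, b' with
  | .inl u, .inl v => ∀ t, u t ≠ v t
  | .inl _, .inr _ => True
  | .inr _, .inl _ => True
  | .inr p, .inr q => p ≠ q

def covEdge (u v w : CellT ℓ S r) : Finset (VV ℓ m S r) :=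
  {(Sum.inl u, j0 ℓ m), (Sum.inl v, j0 ℓ m), (Sum.inl w, j0 ℓ m)} ∪
    (Finset.univ.image (fun p : Fin (ℓ - 3) => (Sum.inr p, j0 ℓ m)))

def CC : Set (Finset (VV ℓ m S r)) :=
  {e | e.card = ℓ ∧ ((∃ x ∈ e, ∃ y ∈ e, x ≠ y ∧ x.1 = y.1) ∨
    (∃ u v w : CellT ℓ S r, u ≠ v ∧ u ≠ w ∧ v ≠ w ∧ Cov u v w ∧ e = covEdge ℓ m S r u v w))}

def DD : Set (Finset (VV ℓ m S r)) :=
  {e | e.card = m ∧ ∃ b b', Gadj ℓ S r b b' ∧ (∀ x ∈ e, x.1 = b ∨ x.1 = b') ∧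
    (∃ x ∈ e, x.1 = b) ∧ (∃ x ∈ e, x.1 = b')}

/-- mode coloring at block level -/
def φmode (t : TT S r) : Block ℓ S r → ℕ :=
  fun b => match b with
  | .inl u => (u t).val
  | .inr p => dd ℓ S r t + p.val

def cmode (t : TT S r) : VV ℓ m S r → ℕ := fun x => φmode ℓ S r t x.1

section Facts

variable {ℓ m S r}
variable (hl : 3 ≤ ℓ) (hm : 2 ≤ m) (hS : ∀ s ∈ S, ℓ ≤ s)

lemma mem_Tfin (t : TT S r) : t.1.1 ∈ S ∧ t.1.2 < r t.1.1 := by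
  have h := t.2
  unfold Tfin at h
  rw [Finset.mem_sigma] at h
  exact ⟨h.1, by simpa using h.2⟩

include hl hS in
lemma dd_ge (t : TT S r) : 3 ≤ dd ℓ S r t := by
  have h1 := (mem_Tfin t).1
  have h2 := hS _ h1
  unfold dd
  omega

include hl hS in
lemma dd_add (t : TT S r) : dd ℓ S r t + (ℓ - 3) = t.1.1 := by
  have h1 := (mem_Tfin t).1
  have h2 := hS _ h1
  unfold dd
  omega

include hl hm in
lemma zz_ge : m - 1 ≤ zz ℓ m := by
  unfold zz
  have : 2 * (m - 2) ≤ (ℓ - 1) * (m - 2) := Nat.mul_le_mul_right _ (by omega)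
  omega

include hl in
lemma zz_pigeon : (ℓ - 1) * (m - 2) < zz ℓ m := by
  unfold zz
  omega

lemma Gadj_ne [Nonempty (TT S r)] {b b' : Block ℓ S r} (h : Gadj ℓ S r b b') : b ≠ b' := by
  cases b with
  | inl u =>
    cases b' with
    | inl v =>
      intro he
      have hu : u = v := by injection he
      exact (h (Classical.arbitrary _)) (by rw [hu])
    | inr p => simp
  | inr p =>
    cases b' with
    | inl v => simp
    | inr q =>
      intro he
      exact h (by injection he)

end Facts


section Modes

variable {ℓ m : ℕ} {S : Finset ℕ} {r : ℕ → ℕ}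
variable (hl : 3 ≤ ℓ) (hm : 2 ≤ m) (hS : ∀ s ∈ S, ℓ ≤ s)

lemma φmode_inl (t : TT S r) (u : CellT ℓ S r) :
    φmode ℓ S r t (Sum.inl u) = (u t).val := rfl

lemma φmode_inr (t : TT S r) (p : Fin (ℓ - 3)) :
    φmode ℓ S r t (Sum.inr p) = dd ℓ S r t + p.val := rfl

lemma mem_covEdge {u v w : CellT ℓ S r} {x : VV ℓ m S r} :
    x ∈ covEdge ℓ m S r u v w ↔
      (x = (Sum.inl u, j0 ℓ m) ∨ x = (Sum.inl v, j0 ℓ m) ∨ x = (Sum.inl w, j0 ℓ m) ∨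
        ∃ p : Fin (ℓ - 3), x = (Sum.inr p, j0 ℓ m)) := by
  unfold covEdge
  simp [Finset.mem_union, Finset.mem_insert, eq_comm]

include hl in
lemma covEdge_card {u v w : CellT ℓ S r} (huv : u ≠ v) (huw : u ≠ w) (hvw : v ≠ w) :
    (covEdge ℓ m S r u v w).card = ℓ := by
  unfold covEdge
  rw [Finset.card_union_of_disjoint]
  · have h3 : ({(Sum.inl u, j0 ℓ m), (Sum.inl v, j0 ℓ m), (Sum.inl w, j0 ℓ m)} :
        Finset (VV ℓ m S r)).card = 3 := by
      rw [Finset.card_insert_of_notMem, Finset.card_insert_of_notMem, Finset.card_singleton]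
      · simp only [Finset.mem_singleton]
        intro h
        exact hvw (Sum.inl_injective (congrArg Prod.fst h))
      · simp only [Finset.mem_insert, Finset.mem_singleton]
        rintro (h | h)
        · exact huv (Sum.inl_injective (congrArg Prod.fst h))
        · exact huw (Sum.inl_injective (congrArg Prod.fst h))
    have him : (Finset.univ.image (fun p : Fin (ℓ - 3) => ((Sum.inr p : Block ℓ S r), j0 ℓ m))).card
        = ℓ - 3 := by
      rw [Finset.card_image_of_injective _ (fun p q h =>
        Sum.inr_injective (congrArg Prod.fst h))]
      simp
    rw [h3, him]
    omega
  · rw [Finset.disjoint_left]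
    intro a ha hb
    simp only [Finset.mem_insert, Finset.mem_singleton] at ha
    simp only [Finset.mem_image] at hb
    obtain ⟨p, -, hp⟩ := hb
    rcases ha with h | h | h <;> (rw [← hp] at h; exact absurd (congrArg Prod.fst h) (by simp))

include hl hS in
lemma mode_proper (t : TT S r) : Proper (CC ℓ m S r) (DD ℓ m S r) (cmode ℓ m S r t) := by
  constructor
  · rintro e ⟨hcard, h | ⟨u, v, w, huv, huw, hvw, hcov, he⟩⟩
    · obtain ⟨x, hx, y, hy, hxy, hfst⟩ := h
      exact ⟨x, hx, y, hy, hxy, by unfold cmode; rw [hfst]⟩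
    · subst he
      have hmu : (⟨Sum.inl u, j0 ℓ m⟩ : VV ℓ m S r) ∈ covEdge ℓ m S r u v w :=
        mem_covEdge.mpr (Or.inl rfl)
      have hmv : (⟨Sum.inl v, j0 ℓ m⟩ : VV ℓ m S r) ∈ covEdge ℓ m S r u v w :=
        mem_covEdge.mpr (Or.inr (Or.inl rfl))
      have hmw : (⟨Sum.inl w, j0 ℓ m⟩ : VV ℓ m S r) ∈ covEdge ℓ m S r u v w :=
        mem_covEdge.mpr (Or.inr (Or.inr (Or.inl rfl)))
      have hval : ∀ a : CellT ℓ S r,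
          cmode ℓ m S r t (⟨Sum.inl a, j0 ℓ m⟩ : VV ℓ m S r) = (a t).val := fun a => rfl
      rcases hcov t with h | h | h
      · refine ⟨_, hmu, _, hmv, ?_, ?_⟩
        · intro hc
          exact huv (Sum.inl_injective (congrArg Prod.fst hc))
        · rw [hval, hval, h]
      · refine ⟨_, hmu, _, hmw, ?_, ?_⟩
        · intro hc
          exact huw (Sum.inl_injective (congrArg Prod.fst hc))
        · rw [hval, hval, h]
      · refine ⟨_, hmv, _, hmw, ?_, ?_⟩
        · intro hc
          exact hvw (Sum.inl_injective (congrArg Prod.fst hc))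
        · rw [hval, hval, h]
  · rintro e ⟨hcard, b, b', hG, hsub, ⟨x, hx, hxb⟩, ⟨y, hy, hyb⟩⟩
    refine ⟨x, hx, y, hy, ?_⟩
    unfold cmode
    rw [hxb, hyb]
    cases b with
    | inl u =>
      cases b' with
      | inl v =>
        have h1 := hG t
        rw [φmode_inl, φmode_inl]
        intro hc
        exact h1 (Fin.ext hc)
      | inr p =>
        rw [φmode_inl, φmode_inr]
        have := (u t).isLt
        omega
    | inr p =>
      cases b' with
      | inl v =>
        rw [φmode_inr, φmode_inl]
        have := (v t).isLt
        omega
      | inr q =>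
        have hpq : p ≠ q := hG
        rw [φmode_inr, φmode_inr]
        intro hc
        exact hpq (Fin.ext (by omega))


end Modes

section CellAt
variable {ℓ : ℕ} {S : Finset ℕ} {r : ℕ → ℕ}

/-- a cell with value n at coordinate t and 0 elsewhere -/
def cellAt (hl : 3 ≤ ℓ) (hS : ∀ s ∈ S, ℓ ≤ s) (t : TT S r) (n : ℕ) (hn : n < dd ℓ S r t) :
    CellT ℓ S r :=
  fun t' => if h : t' = t then ⟨n, by rw [h]; exact hn⟩
    else ⟨0, by have := dd_ge hl hS t'; omega⟩

lemma cellAt_self (hl : 3 ≤ ℓ) (hS : ∀ s ∈ S, ℓ ≤ s) (t : TT S r) (n : ℕ)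
    (hn : n < dd ℓ S r t) : ((cellAt hl hS t n hn) t).val = n := by
  unfold cellAt
  rw [dif_pos rfl]

lemma cellAt_other (hl : 3 ≤ ℓ) (hS : ∀ s ∈ S, ℓ ≤ s) (t : TT S r) (n : ℕ)
    (hn : n < dd ℓ S r t) {t' : TT S r} (h : t' ≠ t) :
    ((cellAt hl hS t n hn) t').val = 0 := by
  unfold cellAt
  rw [dif_neg h]

end CellAt

section Modes2

variable {ℓ m : ℕ} {S : Finset ℕ} {r : ℕ → ℕ}
variable (hl : 3 ≤ ℓ) (hm : 2 ≤ m) (hS : ∀ s ∈ S, ℓ ≤ s)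

include hl hS in
lemma mode_uses (t : TT S r) : UsesExactly (cmode ℓ m S r t) (t.1.1) := by
  unfold UsesExactly
  have himg : Finset.univ.image (cmode ℓ m S r t) = Finset.range (dd ℓ S r t + (ℓ - 3)) := by
    ext n
    simp only [Finset.mem_image, Finset.mem_univ, true_and, Finset.mem_range]
    constructor
    · rintro ⟨x, hx⟩
      rw [← hx]
      rcases x with ⟨b, j⟩
      cases b with
      | inl u =>
        have := (u t).isLt
        unfold cmode
        rw [φmode_inl]
        omega
      | inr p =>
        have := p.isLt
        unfold cmode
        rw [φmode_inr]
        omega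
    · intro hn
      rcases Classical.em (n < dd ℓ S r t) with h | h
      · refine ⟨(Sum.inl (cellAt hl hS t n h), j0 ℓ m), ?_⟩
        unfold cmode
        rw [φmode_inl, cellAt_self]
      · refine ⟨(Sum.inr ⟨n - dd ℓ S r t, by omega⟩, j0 ℓ m), ?_⟩
        unfold cmode
        rw [φmode_inr]
        show dd ℓ S r t + (n - dd ℓ S r t) = n
        omega
  rw [himg, Finset.card_range, dd_add hl hS]

include hl hS in
lemma mode_distinct {t t' : TT S r} (h : t ≠ t') :
    ∃ x y : VV ℓ m S r, cmode ℓ m S r t x = cmode ℓ m S r t y ∧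
      cmode ℓ m S r t' x ≠ cmode ℓ m S r t' y := by
  have h1 : (1 : ℕ) < dd ℓ S r t' := by have := dd_ge hl hS t'; omega
  have h0 : ∀ t'' : TT S r, (0:ℕ) < dd ℓ S r t'' := fun t'' => by have := dd_ge hl hS t''; omega
  refine ⟨(Sum.inl (fun t'' => ⟨0, h0 t''⟩), j0 ℓ m),
    (Sum.inl (cellAt hl hS t' 1 h1), j0 ℓ m), ?_, ?_⟩
  · unfold cmode
    rw [φmode_inl, φmode_inl]
    rw [cellAt_other hl hS t' 1 h1 h]
  · unfold cmode
    rw [φmode_inl, φmode_inl]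
    rw [cellAt_self]
    simp

end Modes2

section Inverse

variable {ℓ m : ℕ} {S : Finset ℕ} {r : ℕ → ℕ}

def Bfin (b : Block ℓ S r) : Finset (VV ℓ m S r) :=
  Finset.univ.image (fun j : Fin (zz ℓ m) => (b, j))

lemma mem_Bfin {b : Block ℓ S r} {x : VV ℓ m S r} : x ∈ Bfin b ↔ x.1 = b := by
  unfold Bfin
  simp only [Finset.mem_image, Finset.mem_univ, true_and]
  constructor
  · rintro ⟨j, rfl⟩
    rfl
  · intro h
    exact ⟨x.2, by rw [← h]⟩

lemma Bfin_card (b : Block ℓ S r) : (Bfin (m := m) b).card = zz ℓ m := by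
  unfold Bfin
  rw [Finset.card_image_of_injective _ (fun i j h => (Prod.mk.injEq .. ▸ h).2 ▸ rfl)]
  · simp

variable (hl : 3 ≤ ℓ) (hm : 2 ≤ m) (hS : ∀ s ∈ S, ℓ ≤ s)
variable {c : VV ℓ m S r → ℕ}

include hm in
lemma no_mono_cross [Nonempty (TT S r)] (hc : Proper (CC ℓ m S r) (DD ℓ m S r) c)
    {b b' : Block ℓ S r} (hG : Gadj ℓ S r b b') {a : ℕ}
    (hA : m - 2 < ((Bfin b).filter (fun x => c x = a)).card)
    (hy : ∃ y : VV ℓ m S r, y.1 = b' ∧ c y = a) : False := by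
  obtain ⟨y, hyb, hya⟩ := hy
  obtain ⟨A, hAsub, hAcard⟩ :=
    Finset.exists_subset_card_eq (s := (Bfin b).filter (fun x => c x = a)) (n := m - 1) (by omega)
  have hbne : b ≠ b' := Gadj_ne hG
  have hyA : y ∉ A := by
    intro hmem
    have := hAsub hmem
    rw [Finset.mem_filter, mem_Bfin] at this
    exact hbne (by rw [← this.1, hyb])
  have hAfst : ∀ x ∈ A, x.1 = b := by
    intro x hx
    have := hAsub hx
    rw [Finset.mem_filter, mem_Bfin] at this
    exact this.1
  have hAcol : ∀ x ∈ A, c x = a := by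
    intro x hx
    have := hAsub hx
    rw [Finset.mem_filter] at this
    exact this.2
  set e : Finset (VV ℓ m S r) := insert y A with he
  have hecard : e.card = m := by
    rw [he, Finset.card_insert_of_notMem hyA, hAcard]
    omega
  have heD : e ∈ DD ℓ m S r := by
    refine ⟨hecard, b, b', hG, ?_, ?_, ?_⟩
    · intro x hx
      rw [he, Finset.mem_insert] at hx
      rcases hx with rfl | hx
      · exact Or.inr hyb
      · exact Or.inl (hAfst x hx)
    · have hAne : A.Nonempty := by
        rw [← Finset.card_pos, hAcard]
        omega
      obtain ⟨x, hx⟩ := hAne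
      exact ⟨x, by rw [he]; exact Finset.mem_insert_of_mem hx, hAfst x hx⟩
    · exact ⟨y, by rw [he]; exact Finset.mem_insert_self _ _, hyb⟩
  obtain ⟨u, hu, v, hv, huv⟩ := hc.2 e heD
  have hcol : ∀ x ∈ e, c x = a := by
    intro x hx
    rw [he, Finset.mem_insert] at hx
    rcases hx with rfl | hx
    · exact hya
    · exact hAcol x hx
  rw [hcol u hu, hcol v hv] at huv
  exact huv rfl


end Inverse

section CoreDefs
variable {ℓ : ℕ} {S : Finset ℕ} {r : ℕ → ℕ}

def diag3 (hl : 3 ≤ ℓ) (hS : ∀ s ∈ S, ℓ ≤ s) (j : Fin 3) : Block ℓ S r :=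
  Sum.inl (fun t => ⟨j.val, by have := dd_ge hl hS t; omega⟩)

def coreF (hl : 3 ≤ ℓ) (hS : ∀ s ∈ S, ℓ ≤ s) : Finset (Block ℓ S r) :=
  (Finset.univ.image (Sum.inr : Fin (ℓ - 3) → Block ℓ S r)) ∪
    (Finset.univ.image (diag3 hl hS))

lemma coreF_card (hl : 3 ≤ ℓ) (hS : ∀ s ∈ S, ℓ ≤ s) [Nonempty (TT S r)] :
    (coreF (ℓ := ℓ) (S := S) (r := r) hl hS).card = ℓ := by
  unfold coreF
  rw [Finset.card_union_of_disjoint]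
  · rw [Finset.card_image_of_injective _ Sum.inr_injective,
      Finset.card_image_of_injective _ ?_]
    · simp only [Finset.card_univ, Fintype.card_fin]
      omega
    · intro i j h
      unfold diag3 at h
      have h2 : (⟨i.val, _⟩ : Fin _) = ⟨j.val, _⟩ :=
        congrFun (Sum.inl_injective h) (Classical.arbitrary (TT S r))
      have h3 := congrArg Fin.val h2
      exact Fin.ext h3
  · rw [Finset.disjoint_left]
    intro a ha hb
    simp only [Finset.mem_image, Finset.mem_univ, true_and] at ha hb
    obtain ⟨p, rfl⟩ := ha
    obtain ⟨j, hj⟩ := hb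
    unfold diag3 at hj
    exact absurd hj (by simp)

lemma coreF_adj (hl : 3 ≤ ℓ) (hS : ∀ s ∈ S, ℓ ≤ s) {b b' : Block ℓ S r} (hb : b ∈ coreF (r := r) hl hS)
    (hb' : b' ∈ coreF hl hS) (hne : b ≠ b') : Gadj ℓ S r b b' := by
  unfold coreF at hb hb'
  simp only [Finset.mem_union, Finset.mem_image, Finset.mem_univ, true_and] at hb hb'
  rcases hb with ⟨p, rfl⟩ | ⟨i, rfl⟩ <;> rcases hb' with ⟨q, rfl⟩ | ⟨j, rfl⟩
  · exact fun h => hne (by rw [h])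
  · trivial
  · trivial
  · have hij : i ≠ j := fun h => hne (by rw [h])
    intro t
    show (⟨i.val, _⟩ : Fin _) ≠ ⟨j.val, _⟩
    intro h
    have h3 := congrArg Fin.val h
    exact hij (Fin.ext h3)

end CoreDefs

section Inverse2
variable {ℓ m : ℕ} {S : Finset ℕ} {r : ℕ → ℕ}
variable (hl : 3 ≤ ℓ) (hm : 2 ≤ m) (hS : ∀ s ∈ S, ℓ ≤ s)
variable {c : VV ℓ m S r → ℕ}

include hl hm hS in
lemma colors_ge [Nonempty (TT S r)] (hc : Proper (CC ℓ m S r) (DD ℓ m S r) c) :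
    ℓ ≤ (Finset.univ.image c).card := by
  by_contra hk
  push_neg at hk
  -- for each core block, a popular color
  have hpig : ∀ b : Block ℓ S r, ∃ a : ℕ,
      b ∈ coreF hl hS → (m - 2 < ((Bfin b).filter (fun x => c x = a)).card) := by
    intro b
    have hmap : ∀ x ∈ (Bfin (m := m) b), c x ∈ Finset.univ.image c :=
      fun x _ => Finset.mem_image_of_mem _ (Finset.mem_univ _)
    have hlt : (Finset.univ.image c).card * (m - 2) < (Bfin (m := m) b).card := by
      rw [Bfin_card]
      calc (Finset.univ.image c).card * (m - 2) ≤ (ℓ - 1) * (m - 2) :=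
            Nat.mul_le_mul_right _ (by omega)
        _ < zz ℓ m := zz_pigeon hl
    obtain ⟨a, -, ha⟩ := Finset.exists_lt_card_fiber_of_mul_lt_card_of_maps_to hmap hlt
    exact ⟨a, fun _ => ha⟩
  choose χ hχ using hpig
  -- χ is injective on the core
  have hinj : Set.InjOn χ (coreF (r := r) hl hS) := by
    intro b hb b' hb' he
    by_contra hne
    have hG : Gadj ℓ S r b b' := coreF_adj hl hS hb hb' hne
    refine no_mono_cross hm hc hG (hχ b hb) ?_
    have h2 := hχ b' hb'
    have : ((Bfin (m := m) b').filter (fun x => c x = χ b')).Nonempty := by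
      rw [← Finset.card_pos]
      omega
    obtain ⟨y, hy⟩ := this
    rw [Finset.mem_filter, mem_Bfin] at hy
    exact ⟨y, hy.1, by rw [hy.2, he]⟩
  -- image of core under χ is ℓ distinct colors in the image of c
  have hsub : (coreF (r := r) hl hS).image χ ⊆ Finset.univ.image c := by
    intro a ha
    obtain ⟨b, hb, rfl⟩ := Finset.mem_image.mp ha
    have h2 := hχ b hb
    have : ((Bfin (m := m) b).filter (fun x => c x = χ b)).Nonempty := by
      rw [← Finset.card_pos]
      omega
    obtain ⟨y, hy⟩ := this
    rw [Finset.mem_filter] at hy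
    rw [← hy.2]
    exact Finset.mem_image_of_mem _ (Finset.mem_univ _)
  have := Finset.card_le_card hsub
  rw [Finset.card_image_of_injOn hinj, coreF_card] at this
  omega


include hl hm hS in
lemma blocks_mono [Nonempty (TT S r)] (hc : Proper (CC ℓ m S r) (DD ℓ m S r) c) :
    ∀ x y : VV ℓ m S r, x.1 = y.1 → c x = c y := by
  intro x y hxy
  by_contra hne
  have hxyne : x ≠ y := fun h => hne (by rw [h])
  have hk := colors_ge hl hm hS hc
  set R : Finset ℕ := (Finset.univ.image c) \ {c x, c y} with hR
  have hRcard : ℓ - 2 ≤ R.card := by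
    have h1 : (Finset.univ.image c).card - ({c x, c y} : Finset ℕ).card ≤ R.card :=
      Finset.le_card_sdiff _ _
    have h2 : ({c x, c y} : Finset ℕ).card ≤ 2 :=
      (Finset.card_insert_le _ _).trans (by simp)
    omega
  obtain ⟨R', hR'sub, hR'card⟩ := Finset.exists_subset_card_eq (s := R) (n := ℓ - 2) hRcard
  have hrep : ∀ a : ℕ, ∃ v : VV ℓ m S r, a ∈ R' → c v = a := by
    intro a
    rcases Classical.em (a ∈ R') with h | h
    · have : a ∈ Finset.univ.image c := (Finset.mem_sdiff.mp (hR'sub h)).1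
      obtain ⟨v, -, hv⟩ := Finset.mem_image.mp this
      exact ⟨v, fun _ => hv⟩
    · exact ⟨x, fun h' => absurd h' h⟩
  choose rep hrepc using hrep
  set Reps : Finset (VV ℓ m S r) := R'.image rep with hReps
  have hRepsCol : ∀ w ∈ Reps, c w ∈ R' ∧ w = rep (c w) := by
    intro w hw
    obtain ⟨a, ha, rfl⟩ := Finset.mem_image.mp hw
    rw [hrepc a ha]
    exact ⟨ha, rfl⟩
  have hcx : c x ∉ R' := by
    intro h
    have := Finset.mem_sdiff.mp (hR'sub h)
    simp at this
  have hcy : c y ∉ R' := by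
    intro h
    have := Finset.mem_sdiff.mp (hR'sub h)
    simp at this
  have hxReps : x ∉ Reps := fun h => hcx (hRepsCol x h).1
  have hyReps : y ∉ Reps := fun h => hcy (hRepsCol y h).1
  have hRepsCard : Reps.card = ℓ - 2 := by
    rw [hReps, Finset.card_image_of_injOn, hR'card]
    intro a ha b hb he
    have h1 := hrepc a ha
    have h2 := hrepc b hb
    rw [← h1, ← h2, he]
  set e : Finset (VV ℓ m S r) := insert x (insert y Reps) with he
  have hecard : e.card = ℓ := by
    rw [he, Finset.card_insert_of_notMem (by simp [hxyne, hxReps]),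
      Finset.card_insert_of_notMem hyReps, hRepsCard]
    omega
  have heC : e ∈ CC ℓ m S r := by
    refine ⟨hecard, Or.inl ⟨x, ?_, y, ?_, hxyne, hxy⟩⟩
    · rw [he]; exact Finset.mem_insert_self _ _
    · rw [he]; exact Finset.mem_insert_of_mem (Finset.mem_insert_self _ _)
  obtain ⟨u, hu, v, hv, huv, hceq⟩ := hc.1 e heC
  have hclass : ∀ w ∈ e, w = x ∨ w = y ∨ (c w ∈ R' ∧ w = rep (c w)) := by
    intro w hw
    rw [he, Finset.mem_insert, Finset.mem_insert] at hw
    rcases hw with rfl | rfl | hw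
    · exact Or.inl rfl
    · exact Or.inr (Or.inl rfl)
    · exact Or.inr (Or.inr (hRepsCol w hw))
  rcases hclass u hu with rfl | rfl | ⟨hu1, hu2⟩ <;>
    rcases hclass v hv with rfl | rfl | ⟨hv1, hv2⟩
  · exact huv rfl
  · exact hne hceq
  · rw [hceq] at hcx; exact hcx hv1
  · exact hne hceq.symm
  · exact huv rfl
  · rw [hceq] at hcy; exact hcy hv1
  · rw [← hceq] at hcx; exact hcx hu1
  · rw [← hceq] at hcy; exact hcy hu1
  · exact huv (by rw [hu2, hv2, hceq])


include hl hm hS in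
theorem inverse [Nonempty (TT S r)] (hc : Proper (CC ℓ m S r) (DD ℓ m S r) c) :
    ∃ t : TT S r, ∀ x y : VV ℓ m S r, c x = c y ↔ cmode ℓ m S r t x = cmode ℓ m S r t y := by
  have hmono := blocks_mono hl hm hS hc
  set φb : Block ℓ S r → ℕ := fun b => c (b, j0 ℓ m) with hφb
  have hcφ : ∀ x : VV ℓ m S r, c x = φb x.1 := fun x => hmono x (x.1, j0 ℓ m) rfl
  have hGne : ∀ b b', Gadj ℓ S r b b' → φb b ≠ φb b' := by
    intro b b' hG heq
    refine no_mono_cross hm hc hG (a := φb b) ?_ ⟨(b', j0 ℓ m), rfl, heq.symm⟩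
    have hfe : (Bfin b).filter (fun x => c x = φb b) = Bfin (m := m) b := by
      apply Finset.filter_eq_self.mpr
      intro x hx
      rw [hcφ x, mem_Bfin.mp hx]
    rw [hfe, Bfin_card]
    have := zz_ge hl hm
    omega
  have hDrig : ∀ u v : CellT ℓ S r, (∀ t, u t ≠ v t) →
      φb (Sum.inl u) ≠ φb (Sum.inl v) := fun u v h => hGne _ _ h
  have hCrig : ∀ u v w : CellT ℓ S r, u ≠ v → u ≠ w → v ≠ w → Cov u v w →
      (φb (Sum.inl u) = φb (Sum.inl v) ∨ φb (Sum.inl u) = φb (Sum.inl w) ∨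
        φb (Sum.inl v) = φb (Sum.inl w)) := by
    intro u v w h1 h2 h3 hcov
    have heC : covEdge ℓ m S r u v w ∈ CC ℓ m S r :=
      ⟨covEdge_card hl h1 h2 h3, Or.inr ⟨u, v, w, h1, h2, h3, hcov, rfl⟩⟩
    obtain ⟨p, hp, q, hq, hpq, hceq⟩ := hc.1 _ heC
    have hval : ∀ x : VV ℓ m S r, x ∈ covEdge ℓ m S r u v w →
        x.2 = j0 ℓ m ∧ (x.1 = Sum.inl u ∨ x.1 = Sum.inl v ∨ x.1 = Sum.inl w ∨
          ∃ pp, x.1 = Sum.inr pp) := by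
      intro x hx
      rcases mem_covEdge.mp hx with h | h | h | ⟨pp, h⟩
      · exact ⟨congrArg Prod.snd h, Or.inl (congrArg Prod.fst h)⟩
      · exact ⟨congrArg Prod.snd h, Or.inr (Or.inl (congrArg Prod.fst h))⟩
      · exact ⟨congrArg Prod.snd h, Or.inr (Or.inr (Or.inl (congrArg Prod.fst h)))⟩
      · exact ⟨congrArg Prod.snd h, Or.inr (Or.inr (Or.inr ⟨pp, congrArg Prod.fst h⟩))⟩
    have hfst : p.1 ≠ q.1 := by
      intro h
      exact hpq (Prod.ext h (by rw [(hval p hp).1, (hval q hq).1]))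
    have hφeq : φb p.1 = φb q.1 := by
      rw [← hcφ p, ← hcφ q]; exact hceq
    rcases (hval p hp).2 with hp1 | hp1 | hp1 | ⟨pp, hp1⟩ <;>
      rcases (hval q hq).2 with hq1 | hq1 | hq1 | ⟨qq, hq1⟩ <;>
      rw [hp1, hq1] at hφeq hfst
    · exact absurd rfl hfst
    · exact Or.inl hφeq
    · exact Or.inr (Or.inl hφeq)
    · exact absurd hφeq (hGne _ _ trivial)
    · exact Or.inl hφeq.symm
    · exact absurd rfl hfst
    · exact Or.inr (Or.inr hφeq)
    · exact absurd hφeq (hGne _ _ trivial)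
    · exact Or.inr (Or.inl hφeq.symm)
    · exact Or.inr (Or.inr hφeq.symm)
    · exact absurd rfl hfst
    · exact absurd hφeq (hGne _ _ trivial)
    · exact absurd hφeq (hGne _ _ trivial)
    · exact absurd hφeq (hGne _ _ trivial)
    · exact absurd hφeq (hGne _ _ trivial)
    · refine absurd hφeq (hGne _ _ ?_)
      intro h
      exact hfst (by rw [h])
  obtain ⟨ts, hiff⟩ := rigidity (dd_ge hl hS) hDrig hCrig
  refine ⟨ts, ?_⟩
  intro x y
  rw [hcφ x, hcφ y]
  show φb x.1 = φb y.1 ↔ φmode ℓ S r ts x.1 = φmode ℓ S r ts y.1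
  rcases x with ⟨b, i⟩
  rcases y with ⟨b', i'⟩
  cases b with
  | inl u =>
    cases b' with
    | inl v =>
      rw [φmode_inl, φmode_inl]
      rw [hiff u v]
      constructor
      · intro h; rw [h]
      · intro h; exact Fin.ext h
    | inr p =>
      rw [φmode_inl, φmode_inr]
      constructor
      · intro h
        exact absurd h (hGne _ _ trivial)
      · intro h
        have := (u ts).isLt
        omega
  | inr p =>
    cases b' with
    | inl v =>
      rw [φmode_inr, φmode_inl]
      constructor
      · intro h
        exact absurd h (hGne _ _ trivial)
      · intro h
        have := (v ts).isLt
        omega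
    | inr q =>
      rw [φmode_inr, φmode_inr]
      constructor
      · intro h
        rcases Classical.em (p = q) with hpq | hpq
        · rw [hpq]
        · exact absurd h (hGne _ _ hpq)
      · intro h
        have hpq : p = q := Fin.ext (by omega)
        rw [hpq]


end Inverse2

section EmptyCase

lemma empty_no_proper {ℓ m : ℕ} (hl : 3 ≤ ℓ) (hm : 2 ≤ m)
    (c : Fin ((ℓ - 1) * (m - 1) + 1) → ℕ)
    (hc : Proper {e | e.card = ℓ} {e | e.card = m} c) : False := by
  rcases Classical.em (ℓ ≤ (Finset.univ.image c).card) with hk | hk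
  · -- rainbow C-edge
    obtain ⟨R, hRsub, hRcard⟩ := Finset.exists_subset_card_eq (s := Finset.univ.image c) (n := ℓ) hk
    have hrep : ∀ a : ℕ, ∃ v : Fin ((ℓ - 1) * (m - 1) + 1), a ∈ R → c v = a := by
      intro a
      rcases Classical.em (a ∈ R) with h | h
      · obtain ⟨v, -, hv⟩ := Finset.mem_image.mp (hRsub h)
        exact ⟨v, fun _ => hv⟩
      · exact ⟨⟨0, by omega⟩, fun h' => absurd h' h⟩
    choose rep hrepc using hrep
    set e : Finset (Fin ((ℓ - 1) * (m - 1) + 1)) := R.image rep with he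
    have hecol : ∀ w ∈ e, c w ∈ R ∧ w = rep (c w) := by
      intro w hw
      obtain ⟨a, ha, rfl⟩ := Finset.mem_image.mp hw
      rw [hrepc a ha]
      exact ⟨ha, rfl⟩
    have hecard : e.card = ℓ := by
      rw [he, Finset.card_image_of_injOn, hRcard]
      intro a ha b hb hab
      rw [← hrepc a ha, ← hrepc b hb, hab]
    obtain ⟨u, hu, v, hv, huv, hceq⟩ := hc.1 e hecard
    have h1 := (hecol u hu).2
    have h2 := (hecol v hv).2
    exact huv (by rw [h1, h2, hceq])
  · -- monochromatic D-edge
    push_neg at hk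
    have hmap : ∀ x ∈ (Finset.univ : Finset (Fin ((ℓ - 1) * (m - 1) + 1))), c x ∈ Finset.univ.image c :=
      fun x _ => Finset.mem_image_of_mem _ (Finset.mem_univ _)
    have hlt : (Finset.univ.image c).card * (m - 1) < (Finset.univ : Finset (Fin ((ℓ - 1) * (m - 1) + 1))).card := by
      rw [Finset.card_univ, Fintype.card_fin]
      calc (Finset.univ.image c).card * (m - 1) ≤ (ℓ - 1) * (m - 1) :=
            Nat.mul_le_mul_right _ (by omega)
        _ < (ℓ - 1) * (m - 1) + 1 := by omega
    obtain ⟨a, -, ha⟩ := Finset.exists_lt_card_fiber_of_mul_lt_card_of_maps_to hmap hlt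
    obtain ⟨A, hAsub, hAcard⟩ :=
      Finset.exists_subset_card_eq (s := Finset.univ.filter (fun x => c x = a)) (n := m) (by omega)
    obtain ⟨u, hu, v, hv, huv⟩ := hc.2 A hAcard
    have h1 := (Finset.mem_filter.mp (hAsub hu)).2
    have h2 := (Finset.mem_filter.mp (hAsub hv)).2
    rw [h1, h2] at huv
    exact huv rfl

end EmptyCase


end Stmt18

open Stmt18

theorem stmt18 (ℓ m : ℕ) (hl : 3 ≤ ℓ) (hm : 2 ≤ m) (S : Finset ℕ)
    (hS : ∀ s ∈ S, ℓ ≤ s) (r : ℕ → ℕ) (hr : ∀ s ∈ S, 0 < r s) :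
    ∃ (V : Type) (_ : Fintype V) (_ : DecidableEq V) (C D : Set (Finset V)),
      (∀ e ∈ C, e.card = ℓ) ∧ (∀ e ∈ D, e.card = m) ∧
      (∀ s : ℕ, (∃ c : V → ℕ, Proper C D c ∧ UsesExactly c s) ↔ s ∈ S) ∧
      (∀ s ∈ S,
        {P : Finset (Finset V) |
          ∃ c : V → ℕ, Proper C D c ∧ UsesExactly c s ∧ colorClasses c = P}.ncard
          = r s) := by
  rcases S.eq_empty_or_nonempty with rfl | hSne
  · refine ⟨Fin ((ℓ - 1) * (m - 1) + 1), inferInstance, inferInstance,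
      {e | e.card = ℓ}, {e | e.card = m}, fun e he => he, fun e he => he, ?_, ?_⟩
    · intro s
      simp only [Finset.notMem_empty, iff_false]
      rintro ⟨c, hc, -⟩
      exact empty_no_proper hl hm c hc
    · intro s hs
      exact absurd hs (Finset.notMem_empty s)
  · obtain ⟨s0, hs0⟩ := hSne
    haveI hTne : Nonempty (TT S r) := by
      refine ⟨⟨⟨s0, 0⟩, ?_⟩⟩
      unfold Tfin
      rw [Finset.mem_sigma]
      exact ⟨hs0, by simp [hr _ hs0]⟩
    refine ⟨VV ℓ m S r, inferInstance, inferInstance, CC ℓ m S r, DD ℓ m S r,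
      fun e he => he.1, fun e he => he.1, ?_, ?_⟩
    · intro s
      constructor
      · rintro ⟨c, hc, hu⟩
        obtain ⟨t, hiff⟩ := inverse hl hm hS hc
        have h1 : (Finset.univ.image c).card = (Finset.univ.image (cmode ℓ m S r t)).card :=
          card_image_eq_of_iff hiff
        have h2 := mode_uses hl hS (m := m) t
        unfold UsesExactly at hu h2
        have hst : s = t.1.1 := by rw [← hu, h1, h2]
        rw [hst]
        exact (mem_Tfin t).1
      · intro hs
        have hmem : (⟨s, 0⟩ : (_ : ℕ) × ℕ) ∈ Tfin S r := by
          unfold Tfin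
          rw [Finset.mem_sigma]
          exact ⟨hs, by simp [hr _ hs]⟩
        exact ⟨cmode ℓ m S r ⟨⟨s, 0⟩, hmem⟩, mode_proper hl hS _, mode_uses hl hS _⟩
    · intro s hs
      set Tsub : Finset (TT S r) := Finset.univ.filter (fun t : TT S r => t.1.1 = s) with hTsub
      have hseteq : {P : Finset (Finset (VV ℓ m S r)) |
          ∃ c, Proper (CC ℓ m S r) (DD ℓ m S r) c ∧ UsesExactly c s ∧ colorClasses c = P}
          = ↑(Tsub.image (fun t => colorClasses (cmode ℓ m S r t))) := by
        ext P
        simp only [Set.mem_setOf_eq, Finset.coe_image, Set.mem_image, Finset.mem_coe]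
        constructor
        · rintro ⟨c, hc, hu, rfl⟩
          obtain ⟨t, hiff⟩ := inverse hl hm hS hc
          have h1 : (Finset.univ.image c).card = (Finset.univ.image (cmode ℓ m S r t)).card :=
            card_image_eq_of_iff hiff
          have h2 := mode_uses hl hS (m := m) t
          unfold UsesExactly at hu h2
          have hst : t.1.1 = s := by rw [← h2, ← h1, hu]
          refine ⟨t, ?_, (colorClasses_eq_of_iff hiff).symm⟩
          rw [hTsub]
          simp [hst]
        · rintro ⟨t, ht, rfl⟩
          rw [Finset.mem_filter] at ht
          refine ⟨cmode ℓ m S r t, mode_proper hl hS t, ?_, rfl⟩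
          have h2 := mode_uses hl hS (m := m) t
          unfold UsesExactly at h2 ⊢
          rw [h2, ht.2]
      rw [hseteq, Set.ncard_coe_finset]
      have hinj : Set.InjOn (fun t => colorClasses (cmode ℓ m S r t)) Tsub := by
        intro t ht t' ht' he
        by_contra hne
        obtain ⟨x, y, hxy1, hxy2⟩ := mode_distinct hl hS (m := m) hne
        exact hxy2 (colorClasses_rel he hxy1)
      rw [Finset.card_image_of_injOn hinj]
      -- Tsub.card = r s
      refine Finset.card_bij (fun t _ => t.1.2) ?_ ?_ ?_ |>.trans (Finset.card_range (r s))
      · intro t ht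
        rw [hTsub, Finset.mem_filter] at ht
        rw [Finset.mem_range, ← ht.2]
        exact (mem_Tfin t).2
      · intro t ht t' ht' he
        rw [hTsub, Finset.mem_filter] at ht ht'
        rcases t with ⟨⟨a1, a2⟩, hmem⟩
        rcases t' with ⟨⟨b1, b2⟩, hmem'⟩
        simp only at ht ht' he
        have h1 : a1 = b1 := by rw [ht.2, ht'.2]
        subst h1
        subst he
        rfl
      · intro b hb
        rw [Finset.mem_range] at hb
        have hmem : (⟨s, b⟩ : (_ : ℕ) × ℕ) ∈ Tfin S r := by
          unfold Tfin
          rw [Finset.mem_sigma]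
          exact ⟨hs, by simp [hb]⟩
        refine ⟨⟨⟨s, b⟩, hmem⟩, ?_, rfl⟩
        rw [hTsub]
        exact Finset.mem_filter.mpr ⟨Finset.mem_univ _, rfl⟩
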